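/- The Borsuk graph BG(n, α) has chromatic number at least n + 2 for every 0 < α < 2, assuming the Borsuk–Ulam theorem. -/

import Mathlib

/-- The Borsuk graph `BG(n, α)`: vertices are the points of the unit sphere
`Sⁿ ⊂ ℝ^{n+1}`, with an edge between `x ≠ y` whenever `‖x − y‖ ≥ α`. -/
def BorsukGraph (n : ℕ) (α : ℝ) :
    SimpleGraph (Metric.sphere (0 : EuclideanSpace ℝ (Fin (n + 1))) 1) where
  Adj x y := x ≠ y ∧ α ≤ ‖(x : EuclideanSpace ℝ (Fin (n + 1))) - y‖
  symm := by
    constructor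
    intro x y h
    exact ⟨h.1.symm, by rw [norm_sub_rev]; exact h.2⟩
  loopless := by constructor; intro x h; exact h.1 rfl

open Metric

/-- Assuming the Borsuk–Ulam theorem (no continuous antipodal map
`Sⁿ → S^{n−1}`), the Borsuk graph `BG(n, α)` has chromatic number at least
`n + 2` for every `0 < α < 2`. -/
theorem borsukGraph_chromatic_ge (n : ℕ)
    (borsuk_ulam : ¬ ∃ f : Metric.sphere (0 : EuclideanSpace ℝ (Fin (n + 1))) 1 →
        Metric.sphere (0 : EuclideanSpace ℝ (Fin n)) 1,
      Continuous f ∧ ∀ x, f (-x) = -f x)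
    (α : ℝ) (hα₀ : 0 < α) (hα₂ : α < 2) :
    ((n + 2 : ℕ) : ℕ∞) ≤ (BorsukGraph n α).chromaticNumber := by
  classical
  by_contra hlt
  push_neg at hlt
  have hcol : (BorsukGraph n α).Colorable (n+1) := by
    rw [← SimpleGraph.chromaticNumber_le_iff_colorable]
    have : ((n + 2 : ℕ) : ℕ∞) = ((n + 1 : ℕ) : ℕ∞) + 1 := by push_cast; ring
    rw [this] at hlt
    exact Order.le_of_lt_add_one hlt
  obtain ⟨C⟩ := hcol
  set S := Metric.sphere (0 : EuclideanSpace ℝ (Fin (n + 1))) 1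
  -- distance between antipodes is 2
  have hdist : ∀ x : S, dist x (-x) = 2 := by
    intro x
    have hx : ‖(x : EuclideanSpace ℝ (Fin (n+1)))‖ = 1 := mem_sphere_zero_iff_norm.mp x.2
    rw [Subtype.dist_eq, coe_neg_sphere, dist_eq_norm, sub_neg_eq_add, ← two_smul ℝ,
      norm_smul, hx]
    norm_num
  have hnegneg : ∀ x : S, -(-x) = x := by
    intro x; apply Subtype.ext; simp [coe_neg_sphere]
  let A : Fin (n+1) → Set S := fun i => closure {y : S | C y = i}
  -- no colour class closure contains an antipodal pair
  have hA : ∀ (j : Fin (n+1)) (x : S), x ∈ A j → -x ∈ A j → False := by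
    intro j x hx hnx
    have hε : (0:ℝ) < (2 - α)/2 := by linarith
    obtain ⟨y, hy, hxy⟩ := Metric.mem_closure_iff.mp hx _ hε
    obtain ⟨z, hz, hxz⟩ := Metric.mem_closure_iff.mp hnx _ hε
    have htri := dist_triangle4 x y z (-x)
    rw [hdist x] at htri
    have hzx : dist z (-x) = dist (-x) z := dist_comm _ _
    have hyz : α < dist y z := by linarith
    have hne : y ≠ z := by
      rintro rfl
      rw [dist_self] at hyz; linarith
    have hadj : α ≤ ‖(y : EuclideanSpace ℝ (Fin (n+1))) - z‖ := by
      rw [← dist_eq_norm, ← Subtype.dist_eq]; linarith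
    exact C.valid ⟨hne, hadj⟩ (hy.trans hz.symm)
  by_cases hzero : ∃ x : S, ∀ i : Fin n,
      infDist x (A i.succ) = infDist (-x) (A i.succ)
  · obtain ⟨x, hx⟩ := hzero
    by_cases hmem : ∃ i : Fin n, x ∈ A i.succ
    · obtain ⟨i, hi⟩ := hmem
      have h0 : infDist (-x) (A i.succ) = 0 := by
        rw [← hx i]; exact infDist_zero_of_mem hi
      have hmem' : -x ∈ A i.succ :=
        (IsClosed.mem_iff_infDist_zero isClosed_closure ⟨x, hi⟩).mpr h0
      exact hA _ x hi hmem'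
    · push_neg at hmem
      have hmemneg : ∀ i : Fin n, -x ∉ A i.succ := by
        intro i hmem'
        have h0 : infDist x (A i.succ) = 0 := by
          rw [hx i]; exact infDist_zero_of_mem hmem'
        exact hmem i
          ((IsClosed.mem_iff_infDist_zero isClosed_closure ⟨-x, hmem'⟩).mpr h0)
      have hx0 : C x = 0 := by
        by_contra h
        obtain ⟨i, hi⟩ := Fin.exists_succ_eq.mpr h
        exact hmem i (subset_closure (show C x = i.succ from hi.symm))
      have hnx0 : C (-x) = 0 := by
        by_contra h
        obtain ⟨i, hi⟩ := Fin.exists_succ_eq.mpr h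
        exact hmemneg i (subset_closure (show C (-x) = i.succ from hi.symm))
      exact hA 0 x (subset_closure hx0) (subset_closure hnx0)
  · push_neg at hzero
    let g0 : S → (Fin n → ℝ) := fun x i =>
      infDist x (A i.succ) - infDist (-x) (A i.succ)
    have hg0cont : Continuous g0 := by
      apply continuous_pi
      intro i
      exact (continuous_infDist_pt _).sub
        ((continuous_infDist_pt _).comp continuous_neg)
    have hg0ne : ∀ x, g0 x ≠ 0 := by
      intro x h
      obtain ⟨i, hi⟩ := hzero x
      apply hi
      have := congrFun h i
      simpa [g0, sub_eq_zero] using this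
    have hg0odd : ∀ x, g0 (-x) = -g0 x := by
      intro x
      funext i
      simp only [g0, hnegneg, Pi.neg_apply]
      ring
    let e := (EuclideanSpace.equiv (Fin n) ℝ).symm
    let g : S → EuclideanSpace ℝ (Fin n) := fun x => e (g0 x)
    have hgcont : Continuous g := e.continuous.comp hg0cont
    have hgne : ∀ x, ‖g x‖ ≠ 0 := by
      intro x h
      exact hg0ne x (by
        have : g x = 0 := norm_eq_zero.mp h
        have := e.injective (show e (g0 x) = e 0 by rw [map_zero]; exact this)
        exact this)
    have hgodd : ∀ x, g (-x) = -g x := by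
      intro x; simp only [g, hg0odd, map_neg]
    let f : S → Metric.sphere (0 : EuclideanSpace ℝ (Fin n)) 1 := fun x =>
      ⟨(‖g x‖)⁻¹ • g x, by
        rw [mem_sphere_zero_iff_norm, norm_smul, norm_inv, norm_norm]
        exact inv_mul_cancel₀ (hgne x)⟩
    refine borsuk_ulam ⟨f, ?_, ?_⟩
    · exact Continuous.subtype_mk ((hgcont.norm.inv₀ hgne).smul hgcont) _
    · intro x
      apply Subtype.ext
      show (‖g (-x)‖)⁻¹ • g (-x) = _
      rw [coe_neg_sphere]
      show _ = -((‖g x‖)⁻¹ • g x)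
      rw [hgodd, norm_neg, smul_neg]
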